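/- Let d be a rational number and Ɓ a finite list of pairs of coprime integers (r,a) with 0 < a < r, and let Q_{d,Ɓ}(t) ∈ ℚ⟦t⟧ be the Fano Hilbert series. Then the constant coefficient of Q_{d,Ɓ} equals 1, and for every integer n ≥ 1 the coefficient of t^n in Q_{d,Ɓ} equals (2n+1) + d·n(n+1)(2n+1)/12 − Σ_{(r,a)∈Ɓ} Σ_{j=1}^{n} \overline{bj}(r - \overline{bj})/(2r), where for each pair b is the inverse of a modulo r and \overline{m} denotes the least nonnegative residue of m modulo r. -/

import Mathlib

/-- The Fano Hilbert series `Q_{d,Ɓ}` as a formal power series in `ℚ⟦t⟧`, where the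
basket is recorded as a list of pairs `(r, b)` (with `b` the inverse mod `r` of the
singularity type `a`), and `\overline{m}` is the least nonnegative residue mod `r`. -/
noncomputable def FanoHilbertSeries (d : ℚ) (B : List (ℕ × ℕ)) : PowerSeries ℚ :=
  (1 + PowerSeries.X) * ((1 - PowerSeries.X) ^ 2)⁻¹
    + PowerSeries.X * (1 + PowerSeries.X) * ((1 - PowerSeries.X) ^ 4)⁻¹
        * PowerSeries.C (d / 2)
    - (B.map (fun p =>
        ((1 - PowerSeries.X) * (1 - PowerSeries.X ^ p.1))⁻¹ *
          ∑ i ∈ Finset.Icc 1 (p.1 - 1),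
            PowerSeries.C ((((p.2 * i) % p.1 : ℕ) : ℚ)
                * ((p.1 : ℚ) - (((p.2 * i) % p.1 : ℕ) : ℚ)) / (2 * (p.1 : ℚ)))
              * PowerSeries.X ^ i)).sum

namespace FanoAux

open PowerSeries

lemma coeff_mk_mul_X_pow (f : ℕ → ℚ) (k n : ℕ) :
    PowerSeries.coeff n (PowerSeries.mk f * X ^ k) = if k ≤ n then f (n - k) else 0 := by
  simpa using PowerSeries.coeff_mul_X_pow' (PowerSeries.mk f) k n

lemma inv_helper {A G H : PowerSeries ℚ} (hG : PowerSeries.constantCoeff G ≠ 0)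
    (h : H * G = A) : A * G⁻¹ = H := by
  rw [← h, mul_assoc, PowerSeries.mul_inv_cancel _ hG, mul_one]

lemma S1_mul : PowerSeries.mk (fun n => (2 * n + 1 : ℚ)) * (1 - X) ^ 2 = 1 + X := by
  have e : ((1 - X) ^ 2 : PowerSeries ℚ) = 1 - X ^ 1 - X ^ 1 + X ^ 2 := by ring
  rw [e]
  have e2 : PowerSeries.mk (fun n => (2 * n + 1 : ℚ)) * (1 - X ^ 1 - X ^ 1 + X ^ 2)
      = PowerSeries.mk (fun n => (2 * n + 1 : ℚ))
        - PowerSeries.mk (fun n => (2 * n + 1 : ℚ)) * X ^ 1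
        - PowerSeries.mk (fun n => (2 * n + 1 : ℚ)) * X ^ 1
        + PowerSeries.mk (fun n => (2 * n + 1 : ℚ)) * X ^ 2 := by ring
  rw [e2]
  ext n
  simp only [map_add, map_sub, coeff_mk_mul_X_pow, PowerSeries.coeff_mk,
    PowerSeries.coeff_one, PowerSeries.coeff_X]
  match n with
  | 0 => norm_num
  | 1 => norm_num
  | (m+2) =>
    have h1 : (1:ℕ) ≤ m + 2 := by omega
    have h2 : (2:ℕ) ≤ m + 2 := by omega
    rw [if_pos h1, if_pos h2, if_neg (by omega : ¬(m+2 = 0)), if_neg (by omega : ¬(m+2 = 1))]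
    simp only [show m + 2 - 1 = m + 1 from rfl, show m + 2 - 2 = m from rfl]
    push_cast
    ring

lemma S2_mul :
    PowerSeries.mk (fun n => (n : ℚ) * (n + 1) * (2 * n + 1) / 6) * (1 - X) ^ 4
      = X * (1 + X) := by
  set f : ℕ → ℚ := fun n => (n : ℚ) * (n + 1) * (2 * n + 1) / 6 with hf
  have h4 : (PowerSeries.C (R := ℚ) 4) = 4 := map_ofNat _ 4
  have h6 : (PowerSeries.C (R := ℚ) 6) = 6 := map_ofNat _ 6
  have e : ((1 - X) ^ 4 : PowerSeries ℚ)
      = 1 - PowerSeries.C 4 * X ^ 1 + PowerSeries.C 6 * X ^ 2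
        - PowerSeries.C 4 * X ^ 3 + X ^ 4 := by
    rw [h4, h6]; ring
  have e2 : PowerSeries.mk f * ((1:PowerSeries ℚ) - PowerSeries.C 4 * X ^ 1
        + PowerSeries.C 6 * X ^ 2 - PowerSeries.C 4 * X ^ 3 + X ^ 4)
      = PowerSeries.mk f - PowerSeries.C 4 * (PowerSeries.mk f * X ^ 1)
        + PowerSeries.C 6 * (PowerSeries.mk f * X ^ 2)
        - PowerSeries.C 4 * (PowerSeries.mk f * X ^ 3)
        + PowerSeries.mk f * X ^ 4 := by ring
  rw [e, e2]
  ext n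
  have er : X * (1 + X) = (X ^ 1 + X ^ 2 : PowerSeries ℚ) := by ring
  rw [er]
  simp only [map_add, map_sub, PowerSeries.coeff_C_mul, coeff_mk_mul_X_pow,
    PowerSeries.coeff_mk, PowerSeries.coeff_X_pow]
  match n with
  | 0 => norm_num [hf]
  | 1 => norm_num [hf]
  | 2 => norm_num [hf]
  | 3 => norm_num [hf]
  | (m+4) =>
    rw [if_pos (by omega : 1 ≤ m+4), if_pos (by omega : 2 ≤ m+4),
      if_pos (by omega : 3 ≤ m+4), if_pos (by omega : 4 ≤ m+4),
      if_neg (by omega : ¬(m+4 = 1)), if_neg (by omega : ¬(m+4 = 2))]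
    simp only [show m + 4 - 1 = m + 3 from rfl, show m + 4 - 2 = m + 2 from rfl,
      show m + 4 - 3 = m + 1 from rfl, show m + 4 - 4 = m from rfl, hf]
    push_cast
    ring

lemma basket_mul (r b : ℕ) (hr : 2 ≤ r) :
    PowerSeries.mk (fun n => ∑ j ∈ Finset.Icc 1 n,
        (((b * j) % r : ℕ) : ℚ) * ((r : ℚ) - (((b * j) % r : ℕ) : ℚ)) / (2 * (r : ℚ)))
      * ((1 - X) * (1 - X ^ r))
    = ∑ i ∈ Finset.Icc 1 (r - 1),
        PowerSeries.C ((((b * i) % r : ℕ) : ℚ)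
            * ((r : ℚ) - (((b * i) % r : ℕ) : ℚ)) / (2 * (r : ℚ))) * X ^ i := by
  set c : ℕ → ℚ := fun j =>
    (((b * j) % r : ℕ) : ℚ) * ((r : ℚ) - (((b * j) % r : ℕ) : ℚ)) / (2 * (r : ℚ)) with hc
  set S : ℕ → ℚ := fun n => ∑ j ∈ Finset.Icc 1 n, c j with hS
  have hcr : ∀ j, r ≤ j → c j = c (j - r) := by
    intro j hj
    have hmod : (b * j) % r = (b * (j - r)) % r := by
      conv_lhs => rw [show j = (j - r) + r by omega]
      rw [mul_add, Nat.add_mul_mod_self_right]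
    simp only [hc, hmod]
  have hS_step : ∀ m : ℕ, S (m + 1) = S m + c (m + 1) := by
    intro m
    simpa [hS] using Finset.sum_Icc_succ_top (by omega : 1 ≤ m + 1) c
  have e : ((1 - X) * (1 - X ^ r) : PowerSeries ℚ) = 1 - X ^ 1 - X ^ r + X ^ (r + 1) := by
    ring
  have e2 : PowerSeries.mk S * ((1:PowerSeries ℚ) - X ^ 1 - X ^ r + X ^ (r + 1))
      = PowerSeries.mk S - PowerSeries.mk S * X ^ 1 - PowerSeries.mk S * X ^ r
        + PowerSeries.mk S * X ^ (r + 1) := by ring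
  rw [e, e2]
  ext n
  rw [map_add, map_sub, map_sub]
  simp only [coeff_mk_mul_X_pow, PowerSeries.coeff_mk]
  have hrhs : (PowerSeries.coeff n) (∑ i ∈ Finset.Icc 1 (r - 1),
      PowerSeries.C (c i) * X ^ i) = if n ∈ Finset.Icc 1 (r-1) then c n else 0 := by
    rw [map_sum]
    simp only [PowerSeries.coeff_C_mul, PowerSeries.coeff_X_pow, mul_ite, mul_one, mul_zero]
    rw [Finset.sum_ite_eq (Finset.Icc 1 (r-1)) n c]
  rw [hrhs]
  rcases Nat.eq_zero_or_pos n with hn0 | hn1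
  · subst hn0
    simp [hS]
  · obtain ⟨m, rfl⟩ : ∃ m, n = m + 1 := ⟨n - 1, by omega⟩
    rw [if_pos (by omega : 1 ≤ m + 1), show m + 1 - 1 = m from rfl]
    by_cases hnr : m + 1 < r
    · have h1 : ¬ (r ≤ m + 1) := by omega
      have h2 : ¬ (r + 1 ≤ m + 1) := by omega
      have h3 : m + 1 ∈ Finset.Icc 1 (r - 1) := by rw [Finset.mem_Icc]; omega
      rw [if_neg h1, if_neg h2, if_pos h3, hS_step m]; ring
    · have h1 : r ≤ m + 1 := by omega
      have h3 : ¬ (m + 1 ∈ Finset.Icc 1 (r - 1)) := by rw [Finset.mem_Icc]; omega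
      rw [if_pos h1, if_neg h3]
      by_cases hnr1 : m + 1 = r
      · have h2 : ¬ (r + 1 ≤ m + 1) := by omega
        have h0 : S (m + 1 - r) = 0 := by
          rw [show m + 1 - r = 0 by omega]; simp [hS]
        have hcz : c (m + 1) = 0 := by
          have hm : (b * (m + 1)) % r = 0 := by rw [hnr1]; exact Nat.mul_mod_left b r
          simp only [hc, hm]
          norm_num
        rw [if_neg h2, h0, hS_step m, hcz]; ring
      · have h2 : r + 1 ≤ m + 1 := by omega
        obtain ⟨k, hk⟩ : ∃ k, m + 1 - r = k + 1 := ⟨m - r, by omega⟩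
        rw [if_pos h2, hk, show m + 1 - (r + 1) = k by omega, hS_step m, hS_step k]
        have hcc : c (m + 1) = c (k + 1) := by
          rw [hcr (m + 1) (by omega), hk]
        rw [hcc]; ring

end FanoAux

/-- The coefficients of the Fano Hilbert series: the constant term
is `1` and for `n ≥ 1` the coefficient of `tⁿ` is
`(2n+1) + d·n(n+1)(2n+1)/12 − Σ_{(r,a)∈Ɓ} Σ_{j=1}^{n} \overline{bj}(r-\overline{bj})/(2r)`. -/
theorem fano_hilbert_series_coeff (d : ℚ) (B : List (ℕ × ℕ × ℕ))
    (hB : ∀ p ∈ B, 0 < p.2.1 ∧ p.2.1 < p.1 ∧ Nat.Coprime p.2.1 p.1 ∧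
      1 ≤ p.2.2 ∧ p.2.2 ≤ p.1 - 1 ∧ (p.2.1 * p.2.2) % p.1 = 1) :
    PowerSeries.coeff 0 (FanoHilbertSeries d (B.map fun p => (p.1, p.2.2))) = 1 ∧
    ∀ n : ℕ, 1 ≤ n →
      PowerSeries.coeff n (FanoHilbertSeries d (B.map fun p => (p.1, p.2.2))) =
        (2 * (n : ℚ) + 1) + d * (n : ℚ) * ((n : ℚ) + 1) * (2 * (n : ℚ) + 1) / 12
          - (B.map (fun p => ∑ j ∈ Finset.Icc 1 n,
              (((p.2.2 * j) % p.1 : ℕ) : ℚ)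
                * ((p.1 : ℚ) - (((p.2.2 * j) % p.1 : ℕ) : ℚ)) / (2 * (p.1 : ℚ)))).sum := by
  classical
  open PowerSeries in
  have hG1 : PowerSeries.constantCoeff ((1 - X : PowerSeries ℚ) ^ 2) ≠ 0 := by
    simp
  have hG2 : PowerSeries.constantCoeff ((1 - X : PowerSeries ℚ) ^ 4) ≠ 0 := by
    simp
  have hmain : FanoHilbertSeries d (B.map fun p => (p.1, p.2.2)) =
      PowerSeries.mk (fun n => (2 * n + 1 : ℚ))
        + PowerSeries.mk (fun n => (n : ℚ) * (n + 1) * (2 * n + 1) / 6)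
            * PowerSeries.C (d / 2)
        - (B.map (fun p => PowerSeries.mk (fun n => ∑ j ∈ Finset.Icc 1 n,
            (((p.2.2 * j) % p.1 : ℕ) : ℚ)
              * ((p.1 : ℚ) - (((p.2.2 * j) % p.1 : ℕ) : ℚ)) / (2 * (p.1 : ℚ))))).sum := by
    unfold FanoHilbertSeries
    rw [FanoAux.inv_helper hG1 FanoAux.S1_mul, FanoAux.inv_helper hG2 FanoAux.S2_mul]
    congr 1
    rw [List.map_map]
    congr 1
    apply List.map_congr_left
    intro p hp
    obtain ⟨-, -, -, hb1, hb2, -⟩ := hB p hp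
    have hr : 2 ≤ p.1 := by omega
    simp only [Function.comp]
    rw [mul_comm]
    exact FanoAux.inv_helper
      (by
        have : p.1 ≠ 0 := by omega
        simp [zero_pow this])
      (FanoAux.basket_mul p.1 p.2.2 hr)
  rw [hmain]
  constructor
  · rw [map_sub, map_add, PowerSeries.coeff_mul_C]
    simp only [PowerSeries.coeff_mk]
    have hz : (PowerSeries.coeff 0) ((B.map (fun p => PowerSeries.mk
        (fun n => ∑ j ∈ Finset.Icc 1 n,
          (((p.2.2 * j) % p.1 : ℕ) : ℚ)
            * ((p.1 : ℚ) - (((p.2.2 * j) % p.1 : ℕ) : ℚ)) / (2 * (p.1 : ℚ))))).sum) = 0 := by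
      rw [map_list_sum]
      apply List.sum_eq_zero
      intro x hx
      simp only [List.map_map, List.mem_map] at hx
      obtain ⟨p, -, rfl⟩ := hx
      simp
    rw [hz]
    norm_num
  · intro n hn
    rw [map_sub, map_add, PowerSeries.coeff_mul_C]
    simp only [PowerSeries.coeff_mk]
    have hz : (PowerSeries.coeff n) ((B.map (fun p => PowerSeries.mk
        (fun m => ∑ j ∈ Finset.Icc 1 m,
          (((p.2.2 * j) % p.1 : ℕ) : ℚ)
            * ((p.1 : ℚ) - (((p.2.2 * j) % p.1 : ℕ) : ℚ)) / (2 * (p.1 : ℚ))))).sum)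
        = (B.map (fun p => ∑ j ∈ Finset.Icc 1 n,
            (((p.2.2 * j) % p.1 : ℕ) : ℚ)
              * ((p.1 : ℚ) - (((p.2.2 * j) % p.1 : ℕ) : ℚ)) / (2 * (p.1 : ℚ)))).sum := by
      rw [map_list_sum, List.map_map]
      congr 1
      apply List.map_congr_left
      intro p hp
      simp [Function.comp]
    rw [hz]
    ring
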